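/- For any abelian group A, the group Γ₂(A) is abelian; i.e., the defining relations γ(-x) = γ(x) and γ(x+y+z) - γ(x+y) - γ(y+z) - γ(x+z) + γ(x) + γ(y) + γ(z) = 0 in the group generated by the symbols γ(x), x ∈ A, force the group to be commutative. -/

import Mathlib

/-- The defining relator words for Whitehead's group `Γ₂(A)`, written multiplicatively in the
free group on the symbols `γ(x)`, `x ∈ A`:  `γ(-a)·γ(a)⁻¹` and
`γ(a+b+c)·γ(a+b)⁻¹·γ(b+c)⁻¹·γ(a+c)⁻¹·γ(a)·γ(b)·γ(c)`. -/
def gammaRelWords (A : Type) [AddCommGroup A] : Set (FreeGroup A) :=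
  {w | ∃ a : A, w = FreeGroup.of (-a) * (FreeGroup.of a)⁻¹} ∪
  {w | ∃ a b c : A,
    w = FreeGroup.of (a + b + c) * (FreeGroup.of (a + b))⁻¹ * (FreeGroup.of (b + c))⁻¹ *
        (FreeGroup.of (a + c))⁻¹ * FreeGroup.of a * FreeGroup.of b * FreeGroup.of c}

/-- `Γ₂(A)` as an a priori nonabelian group: the group presented by generators `γ(x)`, `x ∈ A`,
and the defining relations of Whitehead's universal quadratic functor. -/
def Gamma2Presented (A : Type) [AddCommGroup A] : Type := PresentedGroup (gammaRelWords A)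

instance (A : Type) [AddCommGroup A] : Group (Gamma2Presented A) :=
  inferInstanceAs (Group (PresentedGroup (gammaRelWords A)))

namespace Gamma2Aux
variable {A : Type} [AddCommGroup A]

def mkHom : FreeGroup A →* Gamma2Presented A :=
  QuotientGroup.mk' (Subgroup.normalClosure (gammaRelWords A))

def g (a : A) : Gamma2Presented A := mkHom (FreeGroup.of a)

lemma rel (a b c : A) :
    g (a+b+c) * (g (a+b))⁻¹ * (g (b+c))⁻¹ * (g (a+c))⁻¹ * g a * g b * g c
      = (1 : Gamma2Presented A) := by
  have h : (FreeGroup.of (a + b + c) * (FreeGroup.of (a + b))⁻¹ * (FreeGroup.of (b + c))⁻¹ *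
        (FreeGroup.of (a + c))⁻¹ * FreeGroup.of a * FreeGroup.of b * FreeGroup.of c)
        ∈ Subgroup.normalClosure (gammaRelWords A) :=
    Subgroup.subset_normalClosure (Or.inr ⟨a, b, c, rfl⟩)
  have := (QuotientGroup.eq_one_iff _).mpr h
  change mkHom (FreeGroup.of (a + b + c) * (FreeGroup.of (a + b))⁻¹ * (FreeGroup.of (b + c))⁻¹ *
          (FreeGroup.of (a + c))⁻¹ * FreeGroup.of a * FreeGroup.of b * FreeGroup.of c) = 1 at this
  simpa only [g, map_mul, map_inv] using this

lemma g_zero : g (0 : A) = 1 := by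
  have h := rel (0:A) 0 0
  simp only [add_zero] at h
  group at h
  simpa using h

lemma g_comm (a b : A) : g a * g b = g b * g a := by
  have h1 := rel a b (-b)
  have h2 := rel b a (-b)
  simp only [add_neg_cancel, add_assoc, add_zero, g_zero, inv_one, mul_one] at h1 h2
  have e : b + (a + -b) = a := by abel
  rw [e, add_comm b a] at h2
  -- h1 : g a * (g (a+b))⁻¹ * (g (a+-b))⁻¹ * g a * g b * g (-b) = 1
  -- h2 : g a * (g (a+b))⁻¹ * (g (a+-b))⁻¹ * g b * g a * g (-b) = 1
  have h3 : g a * (g (a+b))⁻¹ * (g (a+-b))⁻¹ * (g a * g b)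
      = g a * (g (a+b))⁻¹ * (g (a+-b))⁻¹ * (g b * g a) := by
    have e1 : g a * (g (a+b))⁻¹ * (g (a+-b))⁻¹ * (g a * g b) = (g (-b))⁻¹ := by
      rw [eq_inv_iff_mul_eq_one]; group; group at h1; exact h1
    have e2 : g a * (g (a+b))⁻¹ * (g (a+-b))⁻¹ * (g b * g a) = (g (-b))⁻¹ := by
      rw [eq_inv_iff_mul_eq_one]; group; group at h2; exact h2
    rw [e1, e2]
  exact mul_left_cancel h3

lemma comm_of (a : A) (y : Gamma2Presented A) : g a * y = y * g a := by
  obtain ⟨v, rfl⟩ : ∃ v, mkHom v = y := QuotientGroup.mk'_surjective _ y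
  induction v using FreeGroup.induction_on with
  | C1 => simp
  | of b => exact g_comm a b
  | inv_of b ih => simp only [map_inv]; exact Commute.inv_right ih
  | mul w v ihw ihv => simp only [map_mul]; rw [← mul_assoc, ihw, mul_assoc, ihv, mul_assoc]

lemma comm_all (x y : Gamma2Presented A) : x * y = y * x := by
  obtain ⟨v, rfl⟩ : ∃ v, mkHom v = x := QuotientGroup.mk'_surjective _ x
  induction v using FreeGroup.induction_on with
  | C1 => simp
  | of b => exact comm_of b y
  | inv_of b ih => simp only [map_inv]; exact Commute.inv_left (comm_of b y)
  | mul w v ihw ihv => simp only [map_mul]; rw [mul_assoc, ihv, ← mul_assoc, ihw, mul_assoc]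

end Gamma2Aux

/-- For any abelian group `A`, the group `Γ₂(A)` is abelian: the defining
relations force the presented group to be commutative. -/
theorem gamma2Presented_comm (A : Type) [AddCommGroup A]
    (x y : Gamma2Presented A) : x * y = y * x := by
  exact Gamma2Aux.comm_all x y
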